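/- Littlewood's supremum argument: let R := {φ ∈ (0, π) : there exists t > 0 with A φ t = 0 and A φ s ∈ (0, π) for all s ∈ [0, t)} be the set of initial angles from which the rod first falls on the right. Then φ₀ := sup R satisfies φ₀ ∈ (0, π) and A φ₀ t ∈ (0, π) for all t ≥ 0; that is, the rod released at rest from the angle sup R never becomes horizontal. -/

import Mathlib

open Set Real Filter Topology


lemma PL.lipCos (a b : ℝ) : |Real.cos a - Real.cos b| ≤ |a - b| := by
  rw [Real.cos_sub_cos]
  rw [abs_mul, abs_mul, abs_neg]
  have h1 : |Real.sin ((a+b)/2)| ≤ 1 := Real.abs_sin_le_one _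
  have h2 : |Real.sin ((a-b)/2)| ≤ |(a-b)/2| := Real.abs_sin_le_abs
  have : |(a-b)/2| = |a-b|/2 := by rw [abs_div]; norm_num
  calc |(2:ℝ)| * |Real.sin ((a + b) / 2)| * |Real.sin ((a - b) / 2)|
      ≤ |(2:ℝ)| * 1 * |(a-b)/2| := by
        apply mul_le_mul (mul_le_mul le_rfl h1 (abs_nonneg _) (abs_nonneg _)) h2 (abs_nonneg _)
        positivity
    _ = |a - b| := by rw [this, abs_two]; ring

lemma PL.lipSin (a b : ℝ) : |Real.sin a - Real.sin b| ≤ |a - b| := by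
  rw [Real.sin_sub_sin]
  rw [abs_mul, abs_mul]
  have h1 : |Real.cos ((a+b)/2)| ≤ 1 := Real.abs_cos_le_one _
  have h2 : |Real.sin ((a-b)/2)| ≤ |(a-b)/2| := Real.abs_sin_le_abs
  have : |(a-b)/2| = |a-b|/2 := by rw [abs_div]; norm_num
  calc |(2:ℝ)| * |Real.sin ((a - b) / 2)| * |Real.cos ((a + b) / 2)|
      ≤ |(2:ℝ)| * |(a-b)/2| * 1 := by
        apply mul_le_mul (mul_le_mul le_rfl h2 (abs_nonneg _) (abs_nonneg _)) h1 (abs_nonneg _)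
        positivity
    _ = |a - b| := by rw [this, abs_two]; ring

/-- decrease lemma: deriv ≤ 0 on [a,b] implies f b ≤ f a -/
lemma PL.decr {f : ℝ → ℝ} (hf : Differentiable ℝ f) {a b : ℝ} (hab : a ≤ b)
    (h : ∀ s ∈ Icc a b, deriv f s ≤ 0) : f b ≤ f a := by
  have := antitoneOn_of_deriv_nonpos (convex_Icc a b) hf.continuous.continuousOn
    (hf.differentiableOn) (fun x hx => h x (interior_subset hx))
  exact this (left_mem_Icc.2 hab) (right_mem_Icc.2 hab) hab


def IsPendulumSolution (g : ℝ) (u : ℝ → ℝ) (α : ℝ → ℝ) : Prop :=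
  ContDiff ℝ 2 α ∧
    ∀ t : ℝ, deriv (deriv α) t = -g * Real.cos (α t) + u t * Real.sin (α t)

lemma PL.diff1 {g u α} (h : IsPendulumSolution g u α) : Differentiable ℝ α :=
  h.1.differentiable (by norm_num)

lemma PL.diff2 {g u α} (h : IsPendulumSolution g u α) : Differentiable ℝ (deriv α) := by
  have h2 : ContDiff ℝ ((1:ℕ)+1) α := by exact_mod_cast h.1
  exact ((contDiff_succ_iff_deriv.mp h2).2.2).differentiable (by norm_num)

lemma PL.contdd {g u α} (hu : Continuous u) (h : IsPendulumSolution g u α) :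
    Continuous (deriv (deriv α)) := by
  have : deriv (deriv α) = fun t => -g * Real.cos (α t) + u t * Real.sin (α t) :=
    funext h.2
  rw [this]
  exact (continuous_const.mul ((Real.continuous_cos).comp (PL.diff1 h).continuous)).add
    (hu.mul ((Real.continuous_sin).comp (PL.diff1 h).continuous))

lemma PL.derivNonposAtFirstZero {f : ℝ → ℝ} (hf : Differentiable ℝ f) {t₀ : ℝ}
    (ht₀ : 0 < t₀) (h0 : f t₀ = 0) (hpos : ∀ s ∈ Ico (0:ℝ) t₀, 0 < f s) :
    deriv f t₀ ≤ 0 := by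
  have hd := (hf t₀).hasDerivAt
  rw [hasDerivAt_iff_tendsto_slope] at hd
  have hne : (𝓝[Ioo 0 t₀] t₀).NeBot := by
    rw [← mem_closure_iff_nhdsWithin_neBot, closure_Ioo (ne_of_lt ht₀)]
    exact ⟨le_of_lt ht₀, le_refl _⟩
  have hmono : 𝓝[Ioo 0 t₀] t₀ ≤ 𝓝[≠] t₀ :=
    nhdsWithin_mono _ (fun s hs => ne_of_lt hs.2)
  have htend : Tendsto (slope f t₀) (𝓝[Ioo 0 t₀] t₀) (𝓝 (deriv f t₀)) := hd.mono_left hmono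
  refine le_of_tendsto htend ?_
  filter_upwards [self_mem_nhdsWithin] with s hs
  have h1 : 0 < f s := hpos s ⟨le_of_lt hs.1, hs.2⟩
  have h2 : s - t₀ < 0 := sub_neg.2 hs.2
  rw [slope_def_field]
  exact div_nonpos_of_nonneg_of_nonpos (by rw [h0]; linarith) (le_of_lt h2)


lemma PL.crossBelow {g : ℝ} (hg : 0 < g) {u : ℝ → ℝ} (hu : Continuous u) {α : ℝ → ℝ}
    (hsol : IsPendulumSolution g u α) {t₀ : ℝ} (hval : α t₀ = 0)
    (hder : deriv α t₀ ≤ 0) {δ : ℝ} (hδ : 0 < δ) :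
    ∃ t₁ ∈ Ioo t₀ (t₀ + δ), α t₁ < 0 := by
  have hdd : Continuous (deriv (deriv α)) := PL.contdd hu hsol
  have hddt₀ : deriv (deriv α) t₀ = -g := by
    rw [hsol.2 t₀, hval]; simp
  -- find η with dd < -g/2 on [t₀, t₀+η]
  have hopen : IsOpen {s : ℝ | deriv (deriv α) s < -g/2} :=
    isOpen_lt hdd continuous_const
  have ht₀mem : t₀ ∈ {s : ℝ | deriv (deriv α) s < -g/2} := by
    simp only [mem_setOf_eq, hddt₀]; linarith
  obtain ⟨ε, hε, hball⟩ := Metric.isOpen_iff.mp hopen t₀ ht₀mem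
  set η := min (ε/2) (δ/2) with hηdef
  have hη : 0 < η := lt_min (by linarith) (by linarith)
  have hηδ : η < δ := lt_of_le_of_lt (min_le_right _ _) (by linarith)
  have hball' : ∀ s ∈ Icc t₀ (t₀+η), deriv (deriv α) s < -g/2 := by
    intro s hs
    apply hball
    rw [Metric.mem_ball, Real.dist_eq, abs_lt]
    constructor <;> [skip; skip] <;>
      · have := hs.1; have := hs.2
        have : η ≤ ε/2 := min_le_left _ _
        linarith [hs.1, hs.2]
  -- deriv α s ≤ -(g/2)(s - t₀) on [t₀, t₀+η]
  have hF : ∀ b ∈ Icc t₀ (t₀+η), deriv α b ≤ -(g/2) * (b - t₀) := by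
    intro b hb
    have hdF : ∀ s, HasDerivAt (fun s => deriv α s + (g/2) * (s - t₀))
        (deriv (deriv α) s + (g/2)) s := by
      intro s
      have h1 : HasDerivAt (fun s : ℝ => (g/2) * (s - t₀)) ((g/2) * 1) s :=
        ((hasDerivAt_id s).sub_const t₀).const_mul (g/2)
      simpa using ((PL.diff2 hsol s).hasDerivAt).fun_add h1
    have hdiff : Differentiable ℝ (fun s => deriv α s + (g/2) * (s - t₀)) :=
      fun s => (hdF s).differentiableAt
    have := PL.decr hdiff hb.1 (fun s hs => by
      rw [(hdF s).deriv]
      have := hball' s ⟨hs.1, le_trans hs.2 hb.2⟩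
      linarith)
    have ht0 : deriv α t₀ + (g/2) * (t₀ - t₀) = deriv α t₀ := by ring_nf
    rw [ht0] at this
    linarith
  -- α (t₀+η) < 0
  have hdG : ∀ s, HasDerivAt (fun s => α s + (g/4) * (s - t₀)^2)
      (deriv α s + (g/4) * (2 * (s - t₀))) s := by
    intro s
    have h1 : HasDerivAt (fun s : ℝ => (s - t₀)^2) (2 * (s - t₀)) s := by
      simpa using ((hasDerivAt_id s).sub_const t₀).fun_pow 2
    simpa using ((PL.diff1 hsol s).hasDerivAt).fun_add (h1.const_mul (g/4))
  have hdiffG : Differentiable ℝ (fun s => α s + (g/4) * (s - t₀)^2) :=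
    fun s => (hdG s).differentiableAt
  have hfin := PL.decr hdiffG (by linarith : t₀ ≤ t₀ + η) (fun s hs => by
    rw [(hdG s).deriv]
    have := hF s hs
    linarith)
  have ht0 : α t₀ + (g/4) * (t₀ - t₀)^2 = 0 := by rw [hval]; ring
  rw [ht0] at hfin
  refine ⟨t₀ + η, ⟨by linarith, by linarith⟩, ?_⟩
  have hsq : t₀ + η - t₀ = η := by ring
  rw [hsq] at hfin
  nlinarith [pow_pos hη 2, hg]
lemma PL.leftLim_le {f : ℝ → ℝ} (hf : Continuous f) {t c : ℝ} (ht : 0 < t)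
    (h : ∀ s ∈ Ico (0:ℝ) t, f s ≤ c) : f t ≤ c := by
  have hne : (𝓝[Ioo (0:ℝ) t] t).NeBot := by
    rw [mem_closure_iff_nhdsWithin_neBot.symm.eq, closure_Ioo (ne_of_lt ht)]
    exact ⟨le_of_lt ht, le_refl _⟩
  have htt : Tendsto f (𝓝[Ioo (0:ℝ) t] t) (𝓝 (f t)) :=
    (hf.tendsto t).mono_left nhdsWithin_le_nhds
  refine le_of_tendsto htt ?_
  filter_upwards [self_mem_nhdsWithin] with s hs
  exact h s ⟨le_of_lt hs.1, hs.2⟩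

lemma PL.reflect {g : ℝ} {u α : ℝ → ℝ} (hsol : IsPendulumSolution g u α) :
    IsPendulumSolution g (fun t => -(u t)) (fun t => Real.pi - α t) := by
  constructor
  · exact contDiff_const.sub hsol.1
  · intro t
    have h1 : deriv (fun t => Real.pi - α t) = fun t => -(deriv α t) := by
      funext s
      rw [deriv_const_sub]
    rw [h1, deriv.fun_neg, hsol.2 t, Real.cos_pi_sub, Real.sin_pi_sub]
    ring


lemma PL.fall {g : ℝ} (hg : 0 < g) {u : ℝ → ℝ} (hu : Continuous u) :
    ∃ δ : ℝ, 0 < δ ∧ δ < Real.pi ∧ ∀ α : ℝ → ℝ, IsPendulumSolution g u α →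
      deriv α 0 = 0 → 0 < α 0 → α 0 < δ →
      ∃ t₀, 0 < t₀ ∧ α t₀ = 0 ∧ ∀ s ∈ Ico (0:ℝ) t₀, α s ∈ Ioo 0 Real.pi := by
  have hπ : 0 < Real.pi := Real.pi_pos
  obtain ⟨M, hM0, hM⟩ : ∃ M : ℝ, 0 ≤ M ∧ ∀ s ∈ Icc (0:ℝ) 1, |u s| ≤ M := by
    obtain ⟨M0, hM0⟩ := isCompact_Icc.bddAbove_image
      (hu.abs.continuousOn (s := Icc (0:ℝ) 1))
    exact ⟨max M0 0, le_max_right _ _, fun s hs =>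
      le_trans (hM0 (mem_image_of_mem _ hs)) (le_max_left _ _)⟩
  set ε := min (Real.pi/4) (g/(5*(M+1))) with hεdef
  have hε0 : 0 < ε := lt_min (by positivity) (by positivity)
  have hεπ4 : ε ≤ Real.pi/4 := min_le_left _ _
  have hεM : ε ≤ g/(5*(M+1)) := min_le_right _ _
  have hkey : g/2 ≤ g * Real.cos ε - M * Real.sin ε := by
    have hc : Real.cos (Real.pi/4) ≤ Real.cos ε :=
      Real.cos_le_cos_of_nonneg_of_le_pi (le_of_lt hε0) (by linarith) hεπ4
    rw [Real.cos_pi_div_four] at hc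
    have hs : Real.sin ε ≤ ε := Real.sin_le (le_of_lt hε0)
    have hMs : M * Real.sin ε ≤ M * ε := mul_le_mul_of_nonneg_left hs hM0
    have hMε : M * ε ≤ g/5 := by
      have h1 : M * ε ≤ M * (g/(5*(M+1))) := mul_le_mul_of_nonneg_left hεM hM0
      have h2 : M * (g/(5*(M+1))) ≤ g/5 := by
        rw [mul_div_assoc', div_le_div_iff₀ (by positivity) (by norm_num)]
        nlinarith
      linarith
    have hsqrt : (1.4:ℝ) ≤ Real.sqrt 2 := by
      nlinarith [Real.sq_sqrt (by norm_num : (0:ℝ) ≤ 2), Real.sqrt_nonneg 2]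
    nlinarith [mul_le_mul_of_nonneg_left hc (le_of_lt hg)]
  set δ := min (ε/2) (g/8) with hδdef
  have hδ0 : 0 < δ := lt_min (by linarith) (by linarith)
  have hδε : δ ≤ ε/2 := min_le_left _ _
  have hδg : δ ≤ g/8 := min_le_right _ _
  refine ⟨δ, hδ0, by linarith, ?_⟩
  intro α hsol hder hφ0 hφδ
  have hαc : Continuous α := (PL.diff1 hsol).continuous
  -- region bound
  have hdd : ∀ s ∈ Icc (0:ℝ) 1, 0 < α s → α s ≤ ε → deriv (deriv α) s ≤ -(g/2) := by
    intro s hs h1 h2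
    rw [hsol.2 s]
    have hcos : Real.cos ε ≤ Real.cos (α s) :=
      Real.cos_le_cos_of_nonneg_of_le_pi (le_of_lt h1) (by linarith) h2
    have hsin0 : 0 ≤ Real.sin (α s) :=
      Real.sin_nonneg_of_nonneg_of_le_pi (le_of_lt h1) (by linarith)
    have hsinm : Real.sin (α s) ≤ Real.sin ε := by
      apply Real.strictMonoOn_sin.monotoneOn ⟨by linarith, by linarith⟩
        ⟨by linarith, by linarith⟩ h2
    have husin : u s * Real.sin (α s) ≤ M * Real.sin ε := by
      calc u s * Real.sin (α s) ≤ |u s| * Real.sin (α s) :=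
            mul_le_mul_of_nonneg_right (le_abs_self _) hsin0
        _ ≤ M * Real.sin (α s) := mul_le_mul_of_nonneg_right (hM s hs) hsin0
        _ ≤ M * Real.sin ε := mul_le_mul_of_nonneg_left hsinm hM0
    nlinarith [mul_le_mul_of_nonneg_left hcos (le_of_lt hg)]
  -- claim K
  have hK : ∀ T, 0 ≤ T → T ≤ 1 → (∀ s ∈ Icc (0:ℝ) T, 0 < α s) →
      (∀ s ∈ Icc (0:ℝ) T, α s < ε) ∧ α T ≤ α 0 - (g/4) * T^2 := by
    intro T hT0 hT1 hpos
    have hεbd : ∀ s ∈ Icc (0:ℝ) T, α s < ε := by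
      by_contra hcon
      push_neg at hcon
      obtain ⟨t₂', ht₂'⟩ := hcon
      set B := Icc (0:ℝ) T ∩ α ⁻¹' (Ici ε) with hBdef
      have hBne : B.Nonempty := ⟨t₂', ht₂'.1, ht₂'.2⟩
      have hBc : IsClosed B := isClosed_Icc.inter (isClosed_Ici.preimage hαc)
      have hBb : BddBelow B := ⟨0, fun x hx => hx.1.1⟩
      set t₂ := sInf B with ht₂def
      have ht₂B : t₂ ∈ B := hBc.csInf_mem hBne hBb
      have ht₂0 : 0 < t₂ := by
        rcases eq_or_lt_of_le ht₂B.1.1 with h | h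
        · exfalso
          have : ε ≤ α 0 := by rw [h]; exact ht₂B.2
          linarith
        · exact h
      have hlt : ∀ s ∈ Ico (0:ℝ) t₂, α s < ε := by
        intro s hs
        by_contra hc
        push_neg at hc
        have hsB : s ∈ B := ⟨⟨hs.1, le_trans (le_of_lt hs.2) ht₂B.1.2⟩, hc⟩
        exact absurd (csInf_le hBb hsB) (not_le.2 hs.2)
      have ht₂ε : α t₂ ≤ ε :=
        PL.leftLim_le hαc ht₂0 (fun s hs => le_of_lt (hlt s hs))
      have hαle : ∀ s ∈ Icc (0:ℝ) t₂, α s ≤ ε := by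
        intro s hs
        rcases eq_or_lt_of_le hs.2 with h | h
        · rw [h]; exact ht₂ε
        · exact le_of_lt (hlt s ⟨hs.1, h⟩)
      have hdd2 : ∀ s ∈ Icc (0:ℝ) t₂, deriv (deriv α) s ≤ -(g/2) := by
        intro s hs
        have hsT : s ∈ Icc (0:ℝ) T := ⟨hs.1, le_trans hs.2 ht₂B.1.2⟩
        exact hdd s ⟨hs.1, le_trans hsT.2 hT1⟩ (hpos s hsT) (hαle s hs)
      have hd0 : ∀ s ∈ Icc (0:ℝ) t₂, deriv α s ≤ 0 := by
        intro s hs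
        have := PL.decr (PL.diff2 hsol) hs.1 (fun r hr => by
          have := hdd2 r ⟨hr.1, le_trans hr.2 hs.2⟩; linarith)
        rw [hder] at this
        exact this
      have hmono := PL.decr (PL.diff1 hsol) ht₂B.1.1 hd0
      have : ε ≤ α t₂ := ht₂B.2
      linarith
    refine ⟨hεbd, ?_⟩
    have hdd3 : ∀ s ∈ Icc (0:ℝ) T, deriv (deriv α) s ≤ -(g/2) := fun s hs =>
      hdd s ⟨hs.1, le_trans hs.2 hT1⟩ (hpos s hs) (le_of_lt (hεbd s hs))
    have hd1 : ∀ s ∈ Icc (0:ℝ) T, deriv α s ≤ -(g/2) * s := by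
      intro s hs
      have hdF : ∀ r, HasDerivAt (fun r => deriv α r + (g/2)*r)
          (deriv (deriv α) r + (g/2)) r := fun r => by
        simpa using ((PL.diff2 hsol r).hasDerivAt).fun_add ((hasDerivAt_id r).const_mul (g/2))
      have hdiffF : Differentiable ℝ (fun r => deriv α r + (g/2)*r) :=
        fun r => (hdF r).differentiableAt
      have hdec := PL.decr hdiffF hs.1 (fun r hr => by
        rw [(hdF r).deriv]
        have := hdd3 r ⟨hr.1, le_trans hr.2 hs.2⟩
        linarith)
      rw [hder] at hdec
      linarith
    have hdG : ∀ r, HasDerivAt (fun r => α r + (g/4)*r^2)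
        (deriv α r + (g/4)*(2*r)) r := fun r => by
      have h1 : HasDerivAt (fun r : ℝ => r^2) (2*r) r := by
        simpa using (hasDerivAt_id r).fun_pow 2
      simpa using ((PL.diff1 hsol r).hasDerivAt).fun_add (h1.const_mul (g/4))
    have hdiffG : Differentiable ℝ (fun r => α r + (g/4)*r^2) :=
      fun r => (hdG r).differentiableAt
    have hdec := PL.decr hdiffG hT0 (fun r hr => by
      rw [(hdG r).deriv]
      have := hd1 r hr
      have hr1 := hr.1
      linarith)
    nlinarith [hdec]
  -- existence of a zero
  have hZ : ∃ t ∈ Icc (0:ℝ) 1, α t ≤ 0 := by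
    by_contra hc
    push_neg at hc
    have h1 := (hK 1 (by norm_num) (le_refl _) (fun s hs => hc s hs)).2
    have h2 := hc 1 (by constructor <;> norm_num)
    nlinarith
  set Z := Icc (0:ℝ) 1 ∩ α ⁻¹' (Iic 0) with hZdef
  have hZne : Z.Nonempty := by obtain ⟨t, ht1, ht2⟩ := hZ; exact ⟨t, ht1, ht2⟩
  have hZc : IsClosed Z := isClosed_Icc.inter (isClosed_Iic.preimage hαc)
  have hZb : BddBelow Z := ⟨0, fun x hx => hx.1.1⟩
  set t₀ := sInf Z with ht₀def
  have ht₀Z : t₀ ∈ Z := hZc.csInf_mem hZne hZb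
  have ht₀pos : 0 < t₀ := by
    rcases eq_or_lt_of_le ht₀Z.1.1 with h | h
    · exfalso
      have h2 : α t₀ ≤ 0 := ht₀Z.2
      rw [← h] at h2
      linarith
    · exact h
  have hposIco : ∀ s ∈ Ico (0:ℝ) t₀, 0 < α s := by
    intro s hs
    by_contra hc
    push_neg at hc
    have hsZ : s ∈ Z := ⟨⟨hs.1, le_trans (le_of_lt hs.2) ht₀Z.1.2⟩, hc⟩
    exact absurd (csInf_le hZb hsZ) (not_le.2 hs.2)
  have hge : 0 ≤ α t₀ := by
    have := PL.leftLim_le (f := fun s => -(α s)) (c := 0) hαc.neg ht₀pos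
      (fun s hs => by simp [le_of_lt (hposIco s hs)])
    simpa using this
  have hle0 : α t₀ ≤ 0 := ht₀Z.2
  have hz : α t₀ = 0 := le_antisymm hle0 hge
  refine ⟨t₀, ht₀pos, hz, ?_⟩
  intro s hs
  refine ⟨hposIco s hs, ?_⟩
  have := (hK s hs.1 (le_trans (le_of_lt hs.2) ht₀Z.1.2)
    (fun r hr => hposIco r ⟨hr.1, lt_of_le_of_lt hr.2 hs.2⟩)).1 s ⟨hs.1, le_refl _⟩
  linarith


lemma PL.contDep {g : ℝ} (hg : 0 < g) {u : ℝ → ℝ} (hu : Continuous u) {T : ℝ} (hT : 0 ≤ T) :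
    ∃ C : ℝ, 0 < C ∧ ∀ α β : ℝ → ℝ, IsPendulumSolution g u α → IsPendulumSolution g u β →
      deriv α 0 = 0 → deriv β 0 = 0 →
      ∀ t ∈ Icc (0:ℝ) T, |α t - β t| ≤ C * |α 0 - β 0| := by
  obtain ⟨M, hM0, hM⟩ : ∃ M : ℝ, 0 ≤ M ∧ ∀ s ∈ Icc (0:ℝ) T, |u s| ≤ M := by
    obtain ⟨M0, hM0⟩ := isCompact_Icc.bddAbove_image
      (hu.abs.continuousOn (s := Icc (0:ℝ) T))
    exact ⟨max M0 0, le_max_right _ _, fun s hs =>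
      le_trans (hM0 (mem_image_of_mem _ hs)) (le_max_left _ _)⟩
  set K := 1 + g + M with hKdef
  have hK1 : 1 ≤ K := by linarith
  have hK0 : 0 ≤ K := by linarith
  refine ⟨Real.exp (K * T), Real.exp_pos _, ?_⟩
  intro α β hα hβ hdα hdβ t ht
  set F : ℝ → ℝ × ℝ := fun s => (α s - β s, deriv α s - deriv β s) with hFdef
  set F' : ℝ → ℝ × ℝ :=
    fun s => (deriv α s - deriv β s, deriv (deriv α) s - deriv (deriv β) s) with hF'def
  have hF' : ∀ s, HasDerivAt F (F' s) s := fun s =>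
    (((PL.diff1 hα s).hasDerivAt.sub (PL.diff1 hβ s).hasDerivAt)).prodMk
      (((PL.diff2 hα s).hasDerivAt).sub ((PL.diff2 hβ s).hasDerivAt))
  have hFc : ContinuousOn F (Icc 0 T) :=
    (Continuous.prodMk ((PL.diff1 hα).continuous.sub (PL.diff1 hβ).continuous)
      ((PL.diff2 hα).continuous.sub (PL.diff2 hβ).continuous)).continuousOn
  set δ := |α 0 - β 0| with hδdef
  have ha : ‖F 0‖ ≤ δ := by
    have : F 0 = (α 0 - β 0, 0) := by simp [hFdef, hdα, hdβ]
    rw [this, Prod.norm_def]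
    simp [Real.norm_eq_abs, hδdef]
  have bound : ∀ x ∈ Ico (0:ℝ) T, ‖F' x‖ ≤ K * ‖F x‖ + 0 := by
    intro x hx
    have he : |α x - β x| ≤ ‖F x‖ := by
      rw [Prod.norm_def]
      exact le_trans (le_of_eq (Real.norm_eq_abs _).symm) (le_max_left _ _)
    have hd : |deriv α x - deriv β x| ≤ ‖F x‖ := by
      rw [Prod.norm_def]
      exact le_trans (le_of_eq (Real.norm_eq_abs _).symm) (le_max_right _ _)
    have hdd : |deriv (deriv α) x - deriv (deriv β) x| ≤ (g + M) * |α x - β x| := by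
      rw [hα.2 x, hβ.2 x]
      have h1 : -g * Real.cos (α x) + u x * Real.sin (α x) -
          (-g * Real.cos (β x) + u x * Real.sin (β x)) =
          -g * (Real.cos (α x) - Real.cos (β x)) + u x * (Real.sin (α x) - Real.sin (β x)) := by
        ring
      rw [h1]
      calc |(-g) * (Real.cos (α x) - Real.cos (β x)) + u x * (Real.sin (α x) - Real.sin (β x))|
          ≤ |(-g) * (Real.cos (α x) - Real.cos (β x))| +
            |u x * (Real.sin (α x) - Real.sin (β x))| := abs_add_le _ _
        _ ≤ g * |α x - β x| + M * |α x - β x| := by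
            rw [abs_mul, abs_mul, abs_neg, abs_of_pos hg]
            have h2 := PL.lipCos (α x) (β x)
            have h3 := PL.lipSin (α x) (β x)
            have h4 := hM x ⟨hx.1, le_of_lt hx.2⟩
            have h5 := abs_nonneg (u x)
            have h6 : |u x| * |Real.sin (α x) - Real.sin (β x)| ≤ M * |α x - β x| := by
              apply mul_le_mul h4 h3 (abs_nonneg _) hM0
            nlinarith [abs_nonneg (Real.cos (α x) - Real.cos (β x))]
        _ = (g + M) * |α x - β x| := by ring
    rw [Prod.norm_def]
    rw [add_zero]
    apply max_le
    · rw [Real.norm_eq_abs]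
      calc |deriv α x - deriv β x| ≤ ‖F x‖ := hd
        _ ≤ K * ‖F x‖ := le_mul_of_one_le_left (norm_nonneg _) hK1
    · rw [Real.norm_eq_abs]
      calc |deriv (deriv α) x - deriv (deriv β) x| ≤ (g + M) * |α x - β x| := hdd
        _ ≤ (g + M) * ‖F x‖ := mul_le_mul_of_nonneg_left he (by linarith)
        _ ≤ K * ‖F x‖ := mul_le_mul_of_nonneg_right (by linarith) (norm_nonneg _)
  have hgron := norm_le_gronwallBound_of_norm_deriv_right_le hFc
    (fun x _ => (hF' x).hasDerivWithinAt) ha bound t ht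
  rw [gronwallBound_ε0] at hgron
  have h7 : |α t - β t| ≤ ‖F t‖ := by
    rw [Prod.norm_def]
    exact le_trans (le_of_eq (Real.norm_eq_abs _).symm) (le_max_left _ _)
  have h8 : Real.exp (K * (t - 0)) ≤ Real.exp (K * T) := by
    apply Real.exp_le_exp.2
    have := ht.2
    nlinarith
  have h9 : δ * Real.exp (K * (t - 0)) ≤ δ * Real.exp (K * T) :=
    mul_le_mul_of_nonneg_left h8 (abs_nonneg _)
  calc |α t - β t| ≤ ‖F t‖ := h7
    _ ≤ δ * Real.exp (K * (t - 0)) := hgron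
    _ ≤ δ * Real.exp (K * T) := h9
    _ = Real.exp (K * T) * |α 0 - β 0| := by rw [hδdef, mul_comm]


theorem pendulum_littlewood_sup (g : ℝ) (hg : 0 < g)
    (u : ℝ → ℝ) (hu : Continuous u) (A : ℝ → ℝ → ℝ)
    (hA : ∀ φ : ℝ, IsPendulumSolution g u (A φ) ∧ A φ 0 = φ ∧ deriv (A φ) 0 = 0)
    (R : Set ℝ)
    (hR : R = {φ : ℝ | φ ∈ Set.Ioo (0 : ℝ) Real.pi ∧
      ∃ t > (0 : ℝ), A φ t = 0 ∧
        ∀ s ∈ Set.Ico (0 : ℝ) t, A φ s ∈ Set.Ioo (0 : ℝ) Real.pi})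
    (φ₀ : ℝ) (hφ₀ : φ₀ = sSup R) :
    φ₀ ∈ Set.Ioo (0 : ℝ) Real.pi ∧
      ∀ t : ℝ, 0 ≤ t → A φ₀ t ∈ Set.Ioo (0 : ℝ) Real.pi := by
  have hπ : 0 < Real.pi := Real.pi_pos
  subst hR hφ₀
  -- Step 1 : R is nonempty
  obtain ⟨δ, hδ0, hδπ, hfall⟩ := PL.fall hg hu
  have hψR : δ/2 ∈ {φ : ℝ | φ ∈ Set.Ioo (0 : ℝ) Real.pi ∧
      ∃ t > (0 : ℝ), A φ t = 0 ∧
        ∀ s ∈ Set.Ico (0 : ℝ) t, A φ s ∈ Set.Ioo (0 : ℝ) Real.pi} := by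
    obtain ⟨hsol, h0, hd⟩ := hA (δ/2)
    obtain ⟨t₀, ht₀0, ht₀z, ht₀in⟩ := hfall (A (δ/2)) hsol hd
      (by rw [h0]; linarith) (by rw [h0]; linarith)
    exact ⟨⟨by linarith, by linarith⟩, t₀, ht₀0, ht₀z, ht₀in⟩
  set R := {φ : ℝ | φ ∈ Set.Ioo (0 : ℝ) Real.pi ∧
      ∃ t > (0 : ℝ), A φ t = 0 ∧
        ∀ s ∈ Set.Ico (0 : ℝ) t, A φ s ∈ Set.Ioo (0 : ℝ) Real.pi} with hRdef
  have hRne : R.Nonempty := ⟨δ/2, hψR⟩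
  -- Step 2 : upper bound strictly below π
  obtain ⟨δ', hδ'0, hδ'π, hfall'⟩ := PL.fall hg (hu.neg : Continuous (fun t => -(u t)))
  have hub : ∀ φ ∈ R, φ ≤ Real.pi - δ' := by
    intro φ hφ
    by_contra hc
    push_neg at hc
    obtain ⟨hφIoo, t, ht0, htz, htin⟩ := hφ
    obtain ⟨hsol, h0, hd⟩ := hA φ
    have hβsol := PL.reflect hsol
    have hβd : deriv (fun t => Real.pi - A φ t) 0 = 0 := by
      rw [deriv_const_sub, hd]; ring
    obtain ⟨t₀', ht₀'0, ht₀'z, ht₀'in⟩ := hfall' (fun t => Real.pi - A φ t) hβsol hβd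
      (by rw [h0]; linarith [hφIoo.2]) (by rw [h0]; linarith)
    have hπval : A φ t₀' = Real.pi := by
      have : Real.pi - A φ t₀' = 0 := ht₀'z
      linarith
    rcases lt_trichotomy t₀' t with h | h | h
    · have := htin t₀' ⟨le_of_lt ht₀'0, h⟩
      rw [hπval] at this
      exact absurd this.2 (lt_irrefl _)
    · rw [← h, hπval] at htz
      linarith
    · have := ht₀'in t ⟨le_of_lt ht0, h⟩
      simp only [mem_Ioo] at this
      rw [htz] at this
      linarith [this.1]
  have hbdd : BddAbove R := ⟨Real.pi - δ', hub⟩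
  have hφ₀lb : δ/2 ≤ sSup R := le_csSup hbdd hψR
  have hφ₀ub : sSup R ≤ Real.pi - δ' := csSup_le hRne hub
  have hmem : sSup R ∈ Set.Ioo (0:ℝ) Real.pi := ⟨by linarith, by linarith⟩
  refine ⟨hmem, ?_⟩
  set φ₀ := sSup R with hφ₀def
  obtain ⟨hsol₀, h00, hd0⟩ := hA φ₀
  have hαc : Continuous (A φ₀) := (PL.diff1 hsol₀).continuous
  by_contra hcon
  push_neg at hcon
  obtain ⟨w, hw0, hwout⟩ := hcon
  -- first exit time
  set W := Ici (0:ℝ) ∩ (A φ₀) ⁻¹' (Ioo (0:ℝ) Real.pi)ᶜ with hWdef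
  have hWne : W.Nonempty := ⟨w, hw0, hwout⟩
  have hWc : IsClosed W := isClosed_Ici.inter (isOpen_Ioo.isClosed_compl.preimage hαc)
  have hWb : BddBelow W := ⟨0, fun x hx => hx.1⟩
  set t₁ := sInf W with ht₁def
  have ht₁W : t₁ ∈ W := hWc.csInf_mem hWne hWb
  have ht₁0 : 0 < t₁ := by
    rcases eq_or_lt_of_le (mem_Ici.1 ht₁W.1) with h | h
    · exfalso
      have h2 : A φ₀ t₁ ∉ Ioo (0:ℝ) Real.pi := ht₁W.2
      rw [← h, h00] at h2
      exact h2 hmem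
    · exact h
  have hin : ∀ s ∈ Ico (0:ℝ) t₁, A φ₀ s ∈ Ioo (0:ℝ) Real.pi := by
    intro s hs
    by_contra hc
    have hsW : s ∈ W := ⟨hs.1, hc⟩
    exact absurd (csInf_le hWb hsW) (not_le.2 hs.2)
  have hle : A φ₀ t₁ ≤ Real.pi :=
    PL.leftLim_le hαc ht₁0 (fun s hs => le_of_lt (hin s hs).2)
  have hge : 0 ≤ A φ₀ t₁ := by
    have := PL.leftLim_le (f := fun s => -(A φ₀ s)) (c := 0) hαc.neg ht₁0
      (fun s hs => by simp [le_of_lt (hin s hs).1])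
    simpa using this
  have hout : A φ₀ t₁ ∉ Ioo (0:ℝ) Real.pi := ht₁W.2
  simp only [mem_Ioo, not_and, not_lt] at hout
  have hcases : A φ₀ t₁ = 0 ∨ A φ₀ t₁ = Real.pi := by
    rcases eq_or_lt_of_le hge with h | h
    · exact Or.inl h.symm
    · exact Or.inr (le_antisymm hle (hout h))
  rcases hcases with hz | hzπ
  ----------------------------------------------------------------
  -- Case A : hits 0 first ⇒ φ₀ ∈ R and slightly larger angles too
  ----------------------------------------------------------------
  · have hder : deriv (A φ₀) t₁ ≤ 0 :=
      PL.derivNonposAtFirstZero (PL.diff1 hsol₀) ht₁0 hz (fun s hs => (hin s hs).1)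
    obtain ⟨δc, hδc0, hδc⟩ := Metric.continuousAt_iff.1 (hαc.continuousAt (x := t₁))
      (Real.pi/2) (by positivity)
    obtain ⟨t₂, ht₂mem, ht₂neg⟩ := PL.crossBelow hg hu hsol₀ hz hder hδc0
    have ht₂0 : 0 < t₂ := lt_trans ht₁0 ht₂mem.1
    have hnear : ∀ s ∈ Icc t₁ t₂, |A φ₀ s| < Real.pi/2 := by
      intro s hs
      have h1 : dist s t₁ < δc := by
        rw [Real.dist_eq, abs_of_nonneg (by linarith [hs.1])]
        linarith [hs.2, ht₂mem.2]
      have := hδc h1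
      rwa [Real.dist_eq, hz, sub_zero] at this
    have hltπ : ∀ s ∈ Icc (0:ℝ) t₂, A φ₀ s < Real.pi := by
      intro s hs
      rcases lt_or_ge s t₁ with h | h
      · exact (hin s ⟨hs.1, h⟩).2
      · have := hnear s ⟨h, hs.2⟩
        have := abs_lt.1 this
        linarith [this.2]
    -- strict max below π
    obtain ⟨smax, hsmaxmem, hsmax⟩ := isCompact_Icc.exists_isMaxOn
      (nonempty_Icc.2 (le_of_lt ht₂0)) hαc.continuousOn
    set m := A φ₀ smax with hmdef
    have hmπ : m < Real.pi := hltπ smax hsmaxmem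
    set ε := min (Real.pi - m) (-(A φ₀ t₂)) with hεdef
    have hε0 : 0 < ε := lt_min (by linarith) (by linarith)
    obtain ⟨C, hC0, hCdep⟩ := PL.contDep hg hu (le_of_lt ht₂0)
    set c := min ((Real.pi - φ₀)/2) (ε/(2*C)) with hcdef
    have hc0 : 0 < c := lt_min (by linarith [hmem.2]) (by positivity)
    set ψ := φ₀ + c with hψdef
    have hψπ : ψ < Real.pi := by
      have : c ≤ (Real.pi - φ₀)/2 := min_le_left _ _
      have := hmem.2
      simp only [hψdef]
      linarith
    obtain ⟨hsolψ, h0ψ, hdψ⟩ := hA ψ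
    have hclose : ∀ s ∈ Icc (0:ℝ) t₂, |A ψ s - A φ₀ s| < ε := by
      intro s hs
      have h1 := hCdep (A ψ) (A φ₀) hsolψ hsol₀ hdψ hd0 s hs
      rw [h0ψ, h00] at h1
      have h2 : |ψ - φ₀| = c := by rw [hψdef]; rw [add_sub_cancel_left, abs_of_pos hc0]
      rw [h2] at h1
      have h3 : c ≤ ε/(2*C) := min_le_right _ _
      have h4 : C * c ≤ C * (ε/(2*C)) := mul_le_mul_of_nonneg_left h3 (le_of_lt hC0)
      have h5 : C * (ε/(2*C)) = ε/2 := by field_simp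
      linarith
    -- A ψ goes below 0 at t₂ while staying < π
    have hψt₂ : A ψ t₂ < 0 := by
      have h1 := hclose t₂ ⟨le_of_lt ht₂0, le_refl _⟩
      have h2 : ε ≤ -(A φ₀ t₂) := min_le_right _ _
      have := abs_lt.1 h1
      linarith [this.2]
    have hψπall : ∀ s ∈ Icc (0:ℝ) t₂, A ψ s < Real.pi := by
      intro s hs
      have h1 := hclose s hs
      have h2 : ε ≤ Real.pi - m := min_le_left _ _
      have h3 : A φ₀ s ≤ m := hsmax hs
      have := abs_lt.1 h1
      linarith [this.2]
    -- first zero of A ψ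
    set Z := Icc (0:ℝ) t₂ ∩ (A ψ) ⁻¹' (Iic 0) with hZdef
    have hZne : Z.Nonempty := ⟨t₂, ⟨le_of_lt ht₂0, le_refl _⟩, le_of_lt hψt₂⟩
    have hZc : IsClosed Z := isClosed_Icc.inter
      (isClosed_Iic.preimage (PL.diff1 hsolψ).continuous)
    have hZb : BddBelow Z := ⟨0, fun x hx => hx.1.1⟩
    set t₃ := sInf Z with ht₃def
    have ht₃Z : t₃ ∈ Z := hZc.csInf_mem hZne hZb
    have ht₃0 : 0 < t₃ := by
      rcases eq_or_lt_of_le ht₃Z.1.1 with h | h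
      · exfalso
        have h2 : A ψ t₃ ≤ 0 := ht₃Z.2
        rw [← h, h0ψ] at h2
        have : 0 < ψ := by simp only [hψdef]; linarith [hmem.1]
        linarith
      · exact h
    have hposIco : ∀ s ∈ Ico (0:ℝ) t₃, 0 < A ψ s := by
      intro s hs
      by_contra hcc
      push_neg at hcc
      have hsZ : s ∈ Z := ⟨⟨hs.1, le_trans (le_of_lt hs.2) ht₃Z.1.2⟩, hcc⟩
      exact absurd (csInf_le hZb hsZ) (not_le.2 hs.2)
    have hψge : 0 ≤ A ψ t₃ := by
      have := PL.leftLim_le (f := fun s => -(A ψ s)) (c := 0)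
        (PL.diff1 hsolψ).continuous.neg ht₃0
        (fun s hs => by simp [le_of_lt (hposIco s hs)])
      simpa using this
    have hψle : A ψ t₃ ≤ 0 := ht₃Z.2
    have hψz : A ψ t₃ = 0 := le_antisymm hψle hψge
    have hψR' : ψ ∈ R := by
      refine ⟨⟨by simp only [hψdef]; linarith [hmem.1], hψπ⟩, t₃, ht₃0, hψz, ?_⟩
      intro s hs
      exact ⟨hposIco s hs,
        hψπall s ⟨hs.1, le_trans (le_of_lt hs.2) ht₃Z.1.2⟩⟩
    have : ψ ≤ φ₀ := le_csSup hbdd hψR'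
    simp only [hψdef] at this
    linarith
  ----------------------------------------------------------------
  -- Case B : hits π first ⇒ members of R near φ₀ are blocked
  ----------------------------------------------------------------
  · have hβsol := PL.reflect hsol₀
    have hβz : (fun t => Real.pi - A φ₀ t) t₁ = 0 := by simp [hzπ]
    have hβder : deriv (fun t => Real.pi - A φ₀ t) t₁ ≤ 0 := by
      apply PL.derivNonposAtFirstZero (PL.diff1 hβsol) ht₁0 hβz
      intro s hs
      have := (hin s hs).2
      show 0 < Real.pi - A φ₀ s
      linarith
    obtain ⟨δc, hδc0, hδc⟩ := Metric.continuousAt_iff.1 (hαc.continuousAt (x := t₁))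
      (Real.pi/2) (by positivity)
    obtain ⟨t₂, ht₂mem, ht₂neg⟩ := PL.crossBelow hg
      (hu.neg : Continuous (fun t => -(u t))) hβsol hβz hβder hδc0
    have hαt₂ : Real.pi < A φ₀ t₂ := by
      have h9 : Real.pi - A φ₀ t₂ < 0 := ht₂neg
      linarith
    have ht₂0 : 0 < t₂ := lt_trans ht₁0 ht₂mem.1
    have hnear : ∀ s ∈ Icc t₁ t₂, |A φ₀ s - Real.pi| < Real.pi/2 := by
      intro s hs
      have h1 : dist s t₁ < δc := by
        rw [Real.dist_eq, abs_of_nonneg (by linarith [hs.1])]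
        linarith [hs.2, ht₂mem.2]
      have := hδc h1
      rwa [Real.dist_eq, hzπ] at this
    have hgt0 : ∀ s ∈ Icc (0:ℝ) t₂, 0 < A φ₀ s := by
      intro s hs
      rcases lt_or_ge s t₁ with h | h
      · exact (hin s ⟨hs.1, h⟩).1
      · have := abs_lt.1 (hnear s ⟨h, hs.2⟩)
        linarith [this.1]
    -- strict min above 0
    obtain ⟨smin, hsminmem, hsmin⟩ := isCompact_Icc.exists_isMinOn
      (nonempty_Icc.2 (le_of_lt ht₂0)) hαc.continuousOn
    set μ := A φ₀ smin with hμdef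
    have hμ0 : 0 < μ := hgt0 smin hsminmem
    set ε := min μ (A φ₀ t₂ - Real.pi) with hεdef
    have hε0 : 0 < ε := lt_min hμ0 (by linarith)
    obtain ⟨C, hC0, hCdep⟩ := PL.contDep hg hu (le_of_lt ht₂0)
    obtain ⟨ψ, hψR', hψlb⟩ := exists_lt_of_lt_csSup hRne
      (by linarith [div_pos hε0 (by linarith : (0:ℝ) < 2*C)] :
        φ₀ - ε/(2*C) < sSup R)
    have hψub : ψ ≤ φ₀ := le_csSup hbdd hψR'
    obtain ⟨hsolψ, h0ψ, hdψ⟩ := hA ψ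
    have hclose : ∀ s ∈ Icc (0:ℝ) t₂, |A ψ s - A φ₀ s| < ε := by
      intro s hs
      have h1 := hCdep (A ψ) (A φ₀) hsolψ hsol₀ hdψ hd0 s hs
      rw [h0ψ, h00] at h1
      have h2 : |ψ - φ₀| ≤ ε/(2*C) := by
        rw [abs_of_nonpos (by linarith)]
        linarith
      have h4 : C * |ψ - φ₀| ≤ C * (ε/(2*C)) := mul_le_mul_of_nonneg_left h2 (le_of_lt hC0)
      have h5 : C * (ε/(2*C)) = ε/2 := by field_simp
      linarith
    have hψpos : ∀ s ∈ Icc (0:ℝ) t₂, 0 < A ψ s := by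
      intro s hs
      have h1 := abs_lt.1 (hclose s hs)
      have h2 : ε ≤ μ := min_le_left _ _
      have h3 : μ ≤ A φ₀ s := hsmin hs
      linarith [h1.1]
    have hψt₂ : Real.pi < A ψ t₂ := by
      have h1 := abs_lt.1 (hclose t₂ ⟨le_of_lt ht₂0, le_refl _⟩)
      have h2 : ε ≤ A φ₀ t₂ - Real.pi := min_le_right _ _
      linarith [h1.1]
    obtain ⟨_, t, ht0, htz, htin⟩ := hψR'
    rcases le_or_gt t t₂ with h | h
    · have := hψpos t ⟨le_of_lt ht0, h⟩
      rw [htz] at this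
      exact absurd this (lt_irrefl _)
    · have := htin t₂ ⟨le_of_lt ht₂0, h⟩
      linarith [this.2]
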